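/- Let b_1 ≤ b_2 ≤ ... ≤ b_n be a non-decreasing sequence of non-negative integers, and set e_i = (i-1) - b_i and a_i = i-1 for all 1 ≤ i ≤ n. Then for all 0 ≤ k ≤ m ≤ n, the (m,k) entry of M_{e→a} equals R_{m-k}(B_m), the number of placements of m-k non-attacking rooks on the Ferrers board B_m with m columns in which column i contains b_i cells. -/

import Mathlib

open Polynomial Finset

/-- `IsCOB n a e M` says that `M` is the change-of-basis matrix `M_{e→a}`:
for each `0 ≤ m ≤ n`, the entry `M m k` is the coefficient of `∏_{i=1}^k (x - a_i)`
in the expansion of `∏_{i=1}^m (x - e_i)` in the basis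
`1, (x-a₁), …, ∏_{i=1}^n (x-a_i)`.  (Sequences are 0-indexed: `a i` is `a_{i+1}`.)
Since that basis expansion is unique, this characterizes `M_{e→a}` uniquely. -/
def IsCOB (n : ℕ) (a e : ℕ → ℝ) (M : Matrix (Fin (n+1)) (Fin (n+1)) ℝ) : Prop :=
  ∀ m : Fin (n+1),
    (∏ i ∈ Finset.range (m : ℕ), (X - C (e i))) =
      ∑ k : Fin (n+1), C (M m k) * ∏ i ∈ Finset.range (k : ℕ), (X - C (a i))

/-- `rookCount b m r`: the number of placements of `r` non-attacking rooks on the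
Ferrers board with `m` columns whose `i`-th column (1-indexed) has `b (i-1)` cells,
i.e. the number of `r`-element sets of cells `(i,j)` with `1 ≤ i ≤ m`,
`1 ≤ j ≤ b_i`, no two sharing a column or a row. -/
noncomputable def rookCount (b : ℕ → ℕ) (m r : ℕ) : ℕ :=
  Nat.card {P : Finset (ℕ × ℕ) //
    P.card = r ∧
    (∀ c ∈ P, 1 ≤ c.1 ∧ c.1 ≤ m ∧ 1 ≤ c.2 ∧ c.2 ≤ b (c.1 - 1)) ∧
    (∀ c ∈ P, ∀ c' ∈ P, c ≠ c' → c.1 ≠ c'.1 ∧ c.2 ≠ c'.2)}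

@[reducible] def rcond (b : ℕ → ℕ) (m r : ℕ) (P : Finset (ℕ × ℕ)) : Prop :=
  P.card = r ∧
  (∀ c ∈ P, 1 ≤ c.1 ∧ c.1 ≤ m ∧ 1 ≤ c.2 ∧ c.2 ≤ b (c.1 - 1)) ∧
  (∀ c ∈ P, ∀ c' ∈ P, c ≠ c' → c.1 ≠ c'.1 ∧ c.2 ≠ c'.2)

noncomputable def rbox (b : ℕ → ℕ) (m : ℕ) : Finset (ℕ × ℕ) :=
  Finset.Icc 1 m ×ˢ Finset.Icc 1 ((Finset.range m).sup b)

noncomputable def rA (b : ℕ → ℕ) (m r : ℕ) : Finset (Finset (ℕ × ℕ)) :=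
  ((rbox b m).powerset).filter (rcond b m r)

lemma rcond_sub (b : ℕ → ℕ) {m r : ℕ} {P : Finset (ℕ × ℕ)} (h : rcond b m r P) :
    P ⊆ rbox b m := by
  intro c hc
  obtain ⟨-, h2, -⟩ := h
  obtain ⟨h1, h2, h3, h4⟩ := h2 c hc
  simp only [rbox, Finset.mem_product, Finset.mem_Icc]
  refine ⟨⟨h1, h2⟩, h3, h4.trans ?_⟩
  exact Finset.le_sup (Finset.mem_range.mpr (by omega))

lemma rA_eq_filter (b : ℕ → ℕ) (m r : ℕ) (s : Finset (Finset (ℕ × ℕ)))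
    (hs : ∀ P, rcond b m r P → P ∈ s) :
    s.filter (rcond b m r) = rA b m r := by
  ext P
  simp only [rA, Finset.mem_filter, Finset.mem_powerset]
  constructor
  · rintro ⟨-, h⟩; exact ⟨rcond_sub b h, h⟩
  · rintro ⟨-, h⟩; exact ⟨hs P h, h⟩

lemma rookCount_eq_card (b : ℕ → ℕ) (m r : ℕ) :
    rookCount b m r = (rA b m r).card := by
  have : {P : Finset (ℕ × ℕ) | rcond b m r P} = ↑(rA b m r) := by
    ext P
    simp only [Set.mem_setOf_eq, Finset.coe_filter, rA, Finset.mem_powerset, Set.mem_setOf_eq]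
    exact ⟨fun h => ⟨rcond_sub b h, h⟩, fun h => h.2⟩
  calc rookCount b m r = Nat.card {P : Finset (ℕ × ℕ) // rcond b m r P} := rfl
    _ = {P : Finset (ℕ × ℕ) | rcond b m r P}.ncard := Nat.card_coe_set_eq _
    _ = (rA b m r).card := by rw [this, Set.ncard_coe_finset]

lemma rcond_zero (b : ℕ → ℕ) (m : ℕ) (P : Finset (ℕ × ℕ)) :
    rcond b m 0 P ↔ P = ∅ := by
  constructor
  · rintro ⟨h, -, -⟩; exact Finset.card_eq_zero.mp h
  · rintro rfl; exact ⟨rfl, by simp, by simp⟩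

lemma rookCount_zero (b : ℕ → ℕ) (m : ℕ) : rookCount b m 0 = 1 := by
  rw [rookCount_eq_card]
  have : rA b m 0 = {∅} := by
    ext P
    simp only [rA, Finset.mem_filter, Finset.mem_powerset, rcond_zero, Finset.mem_singleton]
    exact ⟨fun h => h.2, fun h => ⟨by simp [h], h⟩⟩
  simp [this]

lemma rookCount_nil (b : ℕ → ℕ) (r : ℕ) : rookCount b 0 (r+1) = 0 := by
  rw [rookCount_eq_card]
  have : rA b 0 (r+1) = ∅ := by
    ext P
    simp only [rA, Finset.mem_filter, Finset.mem_powerset, Finset.notMem_empty, iff_false]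
    rintro ⟨-, hcard, hbd, -⟩
    have hne : P.Nonempty := Finset.card_pos.mp (by omega)
    obtain ⟨c, hc⟩ := hne
    obtain ⟨h1, h2, -⟩ := hbd c hc
    omega
  simp [this]

lemma rows_injOn {b : ℕ → ℕ} {m r : ℕ} {P : Finset (ℕ × ℕ)} (h : rcond b m r P) :
    Set.InjOn Prod.snd (P : Set (ℕ × ℕ)) := by
  intro c hc c' hc' hsnd
  by_contra hne
  exact ((h.2.2 c hc c' hc' hne).2) hsnd

lemma rows_card {b : ℕ → ℕ} {m r : ℕ} {P : Finset (ℕ × ℕ)} (h : rcond b m r P) :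
    (P.image Prod.snd).card = r := by
  rw [Finset.card_image_of_injOn (rows_injOn h)]; exact h.1

lemma rows_sub {b : ℕ → ℕ} {m r B : ℕ} {P : Finset (ℕ × ℕ)} (h : rcond b m r P)
    (hB : ∀ i, i < m → b i ≤ B) :
    P.image Prod.snd ⊆ Finset.Icc 1 B := by
  intro j hj
  obtain ⟨c, hc, rfl⟩ := Finset.mem_image.mp hj
  obtain ⟨h1, h2, h3, h4⟩ := h.2.1 c hc
  simp only [Finset.mem_Icc]
  exact ⟨h3, h4.trans (hB _ (by omega))⟩

lemma rookCount_le {b : ℕ → ℕ} {m r B : ℕ} (hB : ∀ i, i < m → b i ≤ B)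
    (hne : rookCount b m r ≠ 0) : r ≤ B := by
  rw [rookCount_eq_card] at hne
  obtain ⟨P, hP⟩ := Finset.card_pos.mp (Nat.pos_of_ne_zero hne)
  have h : rcond b m r P := (Finset.mem_filter.mp hP).2
  calc r = (P.image Prod.snd).card := (rows_card h).symm
    _ ≤ (Finset.Icc 1 B).card := Finset.card_le_card (rows_sub h hB)
    _ = B := by simp

lemma rookCount_step (b : ℕ → ℕ) (m r : ℕ) (hmono : ∀ i, i < m → b i ≤ b m) :
    rookCount b (m+1) (r+1) = rookCount b m (r+1) + (b m - r) * rookCount b m r := by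
  simp only [rookCount_eq_card]
  have hsplit := Finset.card_filter_add_card_filter_not
    (s := rA b (m+1) (r+1)) (p := fun P => ∀ c ∈ P, c.1 ≠ m+1)
  rw [← hsplit]
  congr 1
  · -- no rook in last column
    congr 1
    ext P
    simp only [rA, Finset.mem_filter, Finset.mem_powerset]
    constructor
    · rintro ⟨⟨-, ⟨hcard, hbd, hna⟩⟩, hp⟩
      have hc : rcond b m (r+1) P := by
        refine ⟨hcard, fun c hc => ?_, hna⟩
        obtain ⟨h1, h2, h3, h4⟩ := hbd c hc
        have := hp c hc
        exact ⟨h1, by omega, h3, h4⟩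
      exact ⟨rcond_sub b hc, hc⟩
    · rintro ⟨-, hcard, hbd, hna⟩
      have hc : rcond b (m+1) (r+1) P := by
        refine ⟨hcard, fun c hc => ?_, hna⟩
        obtain ⟨h1, h2, h3, h4⟩ := hbd c hc
        exact ⟨h1, by omega, h3, h4⟩
      refine ⟨⟨rcond_sub b hc, hc⟩, fun c hc2 => ?_⟩
      have := (hbd c hc2).2.1
      omega
  · -- rook in last column
    have key : ((rA b m r).sigma
        (fun P => Finset.Icc 1 (b m) \ P.image Prod.snd)).card =
        (Finset.filter (fun P => ¬∀ c ∈ P, c.1 ≠ m+1) (rA b (m+1) (r+1))).card := by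
      apply Finset.card_bij (fun x _ => insert (m+1, x.2) x.1)
      · -- maps to
        rintro ⟨P, j⟩ hx
        rw [Finset.mem_sigma] at hx
        obtain ⟨hP, hj⟩ := hx
        have hcond : rcond b m r P := (Finset.mem_filter.mp hP).2
        rw [Finset.mem_sdiff, Finset.mem_Icc] at hj
        obtain ⟨⟨hj1, hj2⟩, hjrow⟩ := hj
        have hnotmem : (m+1, j) ∉ P := by
          intro hmem
          have := (hcond.2.1 _ hmem).2.1
          simp at this
        have hQ : rcond b (m+1) (r+1) (insert (m+1, j) P) := by
          refine ⟨by rw [Finset.card_insert_of_notMem hnotmem, hcond.1], ?_, ?_⟩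
          · intro c hc
            rcases Finset.mem_insert.mp hc with rfl | hc
            · exact ⟨by omega, le_refl _, hj1, by simpa using hj2⟩
            · obtain ⟨h1, h2, h3, h4⟩ := hcond.2.1 c hc
              exact ⟨h1, by omega, h3, h4⟩
          · intro c hc c' hc' hne
            rcases Finset.mem_insert.mp hc with rfl | hc <;>
              rcases Finset.mem_insert.mp hc' with rfl | hc'
            · exact absurd rfl hne
            · have h1 := (hcond.2.1 c' hc').2.1
              have h2 : c'.2 ∈ P.image Prod.snd := Finset.mem_image_of_mem _ hc'
              constructor
              · simp only []; omega
              · intro he; rw [← he] at h2; exact hjrow h2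
            · have h1 := (hcond.2.1 c hc).2.1
              have h2 : c.2 ∈ P.image Prod.snd := Finset.mem_image_of_mem _ hc
              constructor
              · simp only []; omega
              · intro he; rw [he] at h2; exact hjrow h2
            · exact hcond.2.2 c hc c' hc' hne
        rw [Finset.mem_filter]
        refine ⟨Finset.mem_filter.mpr ⟨Finset.mem_powerset.mpr (rcond_sub b hQ), hQ⟩, ?_⟩
        push_neg
        exact ⟨(m+1, j), Finset.mem_insert_self _ _, rfl⟩
      · -- injective
        rintro ⟨P₁, j₁⟩ h₁ ⟨P₂, j₂⟩ h₂ heq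
        rw [Finset.mem_sigma] at h₁ h₂
        have hc₁ : rcond b m r P₁ := (Finset.mem_filter.mp h₁.1).2
        have hc₂ : rcond b m r P₂ := (Finset.mem_filter.mp h₂.1).2
        have hnm₁ : (m+1, j₁) ∉ P₁ := by
          intro hmem; have := (hc₁.2.1 _ hmem).2.1; simp at this
        have hnm₂ : (m+1, j₂) ∉ P₂ := by
          intro hmem; have := (hc₂.2.1 _ hmem).2.1; simp at this
        have hj : j₁ = j₂ := by
          have : (m+1, j₁) ∈ insert (m+1, j₂) P₂ := by
            rw [← heq]; exact Finset.mem_insert_self _ _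
          rcases Finset.mem_insert.mp this with h | h
          · exact (Prod.mk.injEq _ _ _ _).mp h |>.2
          · have := (hc₂.2.1 _ h).2.1; simp at this
        subst hj
        have hP : P₁ = P₂ := by
          have := congrArg (fun s => Finset.erase s (m+1, j₁)) heq
          simpa [Finset.erase_insert hnm₁, Finset.erase_insert hnm₂] using this
        subst hP
        rfl
      · -- surjective
        intro Q hQ
        rw [Finset.mem_filter] at hQ
        obtain ⟨hQA, hQp⟩ := hQ
        have hcond : rcond b (m+1) (r+1) Q := (Finset.mem_filter.mp hQA).2
        push_neg at hQp
        obtain ⟨c, hcQ, hc1⟩ := hQp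
        have hceq : c = (m+1, c.2) := by rw [← hc1]
        refine ⟨⟨Q.erase c, c.2⟩, ?_, ?_⟩
        · rw [Finset.mem_sigma]
          have hcondP : rcond b m r (Q.erase c) := by
            refine ⟨?_, ?_, ?_⟩
            · rw [Finset.card_erase_of_mem hcQ, hcond.1]; omega
            · intro c' hc'
              have hc'Q := Finset.mem_of_mem_erase hc'
              have hne := Finset.ne_of_mem_erase hc'
              obtain ⟨h1, h2, h3, h4⟩ := hcond.2.1 c' hc'Q
              have : c'.1 ≠ c.1 := (hcond.2.2 c' hc'Q c hcQ hne).1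
              exact ⟨h1, by omega, h3, h4⟩
            · intro a ha a' ha' hne
              exact hcond.2.2 a (Finset.mem_of_mem_erase ha) a'
                (Finset.mem_of_mem_erase ha') hne
          refine ⟨Finset.mem_filter.mpr
            ⟨Finset.mem_powerset.mpr (rcond_sub b hcondP), hcondP⟩, ?_⟩
          rw [Finset.mem_sdiff, Finset.mem_Icc]
          obtain ⟨h1, h2, h3, h4⟩ := hcond.2.1 c hcQ
          refine ⟨⟨h3, ?_⟩, ?_⟩
          · rw [hc1] at h4; simpa using h4
          · intro hmem
            obtain ⟨c', hc', hcc'⟩ := Finset.mem_image.mp hmem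
            have hc'Q := Finset.mem_of_mem_erase hc'
            have hne := Finset.ne_of_mem_erase hc'
            exact (hcond.2.2 c' hc'Q c hcQ hne).2 hcc'
        · rw [← hceq, Finset.insert_erase hcQ]
    have hconst : ∀ P ∈ rA b m r,
        (Finset.Icc 1 (b m) \ P.image Prod.snd).card = b m - r := by
      intro P hP
      have hcond : rcond b m r P := (Finset.mem_filter.mp hP).2
      rw [Finset.card_sdiff_of_subset (rows_sub hcond hmono), rows_card hcond, Nat.card_Icc]
      omega
    have hsum : ((rA b m r).sigma
        (fun P => Finset.Icc 1 (b m) \ P.image Prod.snd)).card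
        = (b m - r) * (rA b m r).card := by
      rw [Finset.card_sigma, Finset.sum_congr rfl hconst, Finset.sum_const,
        smul_eq_mul, mul_comm]
    exact key.symm.trans hsum

lemma rookCount_le_cols {b : ℕ → ℕ} {m r : ℕ} (hne : rookCount b m r ≠ 0) : r ≤ m := by
  rw [rookCount_eq_card] at hne
  obtain ⟨P, hP⟩ := Finset.card_pos.mp (Nat.pos_of_ne_zero hne)
  have h : rcond b m r P := (Finset.mem_filter.mp hP).2
  have hinj : Set.InjOn Prod.fst (P : Set (ℕ × ℕ)) := by
    intro c hc c' hc' hfst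
    by_contra hne'
    exact ((h.2.2 c hc c' hc' hne').1) hfst
  have hsub : P.image Prod.fst ⊆ Finset.Icc 1 m := by
    intro i hi
    obtain ⟨c, hc, rfl⟩ := Finset.mem_image.mp hi
    obtain ⟨h1, h2, -⟩ := h.2.1 c hc
    simp only [Finset.mem_Icc]; exact ⟨h1, h2⟩
  calc r = P.card := h.1.symm
    _ = (P.image Prod.fst).card := (Finset.card_image_of_injOn hinj).symm
    _ ≤ (Finset.Icc 1 m).card := Finset.card_le_card hsub
    _ = m := by simp

noncomputable def Fpoly (k : ℕ) : Polynomial ℝ := ∏ i ∈ Finset.range k, (X - C (i : ℝ))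

lemma Fpoly_monic (k : ℕ) : (Fpoly k).Monic :=
  monic_prod_of_monic _ _ (fun i _ => monic_X_sub_C _)

lemma Fpoly_natDegree (k : ℕ) : (Fpoly k).natDegree = k := by
  rw [Fpoly, natDegree_prod_of_monic _ _ (fun i _ => monic_X_sub_C _)]
  have h1 : ∀ i ∈ Finset.range k, (X - C (i:ℝ)).natDegree = 1 :=
    fun i _ => natDegree_X_sub_C _
  exact (Finset.sum_congr rfl h1).trans (by simp)

lemma Fpoly_indep (N : ℕ) : ∀ c : ℕ → ℝ,
    ∑ k ∈ Finset.range (N+1), C (c k) * Fpoly k = 0 → ∀ k ≤ N, c k = 0 := by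
  induction N with
  | zero =>
    intro c h k hk
    interval_cases k
    have : Fpoly 0 = 1 := by simp [Fpoly]
    rw [Finset.sum_range_one, this, mul_one] at h
    exact_mod_cast (C_eq_zero.mp h)
  | succ N ih =>
    intro c h k hk
    have htop : c (N+1) = 0 := by
      have hco := congrArg (fun p => Polynomial.coeff p (N+1)) h
      simp only [Polynomial.finset_sum_coeff, Polynomial.coeff_zero] at hco
      rw [Finset.sum_range_succ] at hco
      have hz : ∀ j ∈ Finset.range (N+1), (C (c j) * Fpoly j).coeff (N+1) = 0 := by
        intro j hj
        apply Polynomial.coeff_eq_zero_of_natDegree_lt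
        calc (C (c j) * Fpoly j).natDegree ≤ (C (c j)).natDegree + (Fpoly j).natDegree :=
              Polynomial.natDegree_mul_le
          _ = j := by simp [Fpoly_natDegree]
          _ < N + 1 := Finset.mem_range.mp hj
      rw [Finset.sum_eq_zero hz, zero_add, Polynomial.coeff_C_mul] at hco
      have : (Fpoly (N+1)).coeff (N+1) = 1 := by
        have := (Fpoly_monic (N+1)).leadingCoeff
        rwa [Polynomial.leadingCoeff, Fpoly_natDegree] at this
      rw [this, mul_one] at hco
      exact hco
    rcases Nat.lt_or_ge k (N+1) with hlt | hge
    · apply ih c _ k (by omega)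
      rw [Finset.sum_range_succ, htop, map_zero, zero_mul, add_zero] at h
      exact h
    · have : k = N+1 := by omega
      rw [this]; exact htop

lemma key_identity (b : ℕ → ℕ) (m : ℕ) (hb : ∀ i j, i ≤ j → j < m → b i ≤ b j) :
    ∏ i ∈ Finset.range m, (X - C ((i : ℝ) - (b i : ℝ))) =
      ∑ k ∈ Finset.range (m+1), C ((rookCount b m (m-k) : ℝ)) * Fpoly k := by
  induction m with
  | zero => simp [Fpoly, rookCount_zero]
  | succ m ih =>
    have hmono : ∀ i, i < m → b i ≤ b m := fun i hi => hb i m (by omega) (by omega)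
    have hmono' : ∀ i, i < m + 1 → b i ≤ b m := by
      intro i hi
      rcases Nat.lt_or_ge i m with h | h
      · exact hmono i h
      · have : i = m := by omega
        rw [this]
    have ih' := ih (fun i j hij hj => hb i j hij (by omega))
    -- cast lemma
    have hcast : ∀ r : ℕ, ((b m - r : ℕ) : ℝ) * (rookCount b m r : ℝ) =
        ((b m : ℝ) - (r : ℝ)) * (rookCount b m r : ℝ) := by
      intro r
      rcases le_or_gt r (b m) with h | h
      · congr 1; push_cast [h]; ring
      · rcases Nat.eq_zero_or_pos (rookCount b m r) with h0 | h0
        · simp [h0]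
        · exact absurd (rookCount_le (r := r) hmono h0.ne') (by omega)
    set t1 : ℕ → ℝ := fun k => if k = 0 then 0 else (rookCount b m (m+1-k) : ℝ) with ht1
    set t2 : ℕ → ℝ := fun k =>
      if k ≤ m then (rookCount b m (m-k) : ℝ) * ((b m : ℝ) + k - m) else 0 with ht2
    have step1 : ∏ i ∈ Finset.range (m+1), (X - C ((i : ℝ) - (b i : ℝ))) =
        ∑ k ∈ Finset.range (m+1), (C ((rookCount b m (m-k) : ℝ)) * Fpoly (k+1) +
          C ((rookCount b m (m-k) : ℝ) * ((b m : ℝ) + k - m)) * Fpoly k) := by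
      rw [Finset.prod_range_succ, ih', Finset.sum_mul]
      apply Finset.sum_congr rfl
      intro k hk
      have hX : (X - C ((m : ℝ) - (b m : ℝ))) =
          (X - C (k : ℝ)) + C ((b m : ℝ) + k - m) := by
        simp only [map_sub, map_add]
        ring
      have hF : Fpoly (k+1) = Fpoly k * (X - C (k : ℝ)) := by
        rw [Fpoly, Fpoly, Finset.prod_range_succ]
      rw [hX, hF, map_mul]
      ring
    have stepA : ∑ k ∈ Finset.range (m+1),
        C ((rookCount b m (m-k) : ℝ)) * Fpoly (k+1) =
        ∑ k ∈ Finset.range (m+2), C (t1 k) * Fpoly k := by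
      rw [Finset.sum_range_succ' (fun k => C (t1 k) * Fpoly k) (m+1)]
      have h0 : C (t1 0) * Fpoly 0 = 0 := by simp [ht1]
      rw [h0, add_zero]
      apply Finset.sum_congr rfl
      intro k hk
      have : t1 (k+1) = (rookCount b m (m-k) : ℝ) := by
        simp only [ht1, if_neg (Nat.succ_ne_zero k)]
        congr 2
        omega
      rw [this]
    have stepB : ∑ k ∈ Finset.range (m+1),
        C ((rookCount b m (m-k) : ℝ) * ((b m : ℝ) + k - m)) * Fpoly k =
        ∑ k ∈ Finset.range (m+2), C (t2 k) * Fpoly k := by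
      rw [Finset.sum_range_succ (n := m+1)]
      have h0 : C (t2 (m+1)) * Fpoly (m+1) = 0 := by
        simp [ht2]
      rw [h0, add_zero]
      apply Finset.sum_congr rfl
      intro k hk
      have hkm : k ≤ m := by have := Finset.mem_range.mp hk; omega
      simp only [ht2, if_pos hkm]
    rw [step1, Finset.sum_add_distrib, stepA, stepB, ← Finset.sum_add_distrib]
    apply Finset.sum_congr rfl
    intro k hk
    rw [← add_mul, ← map_add]
    congr 1
    have hkm2 : k ≤ m + 1 := by have := Finset.mem_range.mp hk; omega
    rcases le_or_gt k m with hkm | hkm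
    · set r := m - k with hr
      have hs := rookCount_step b m r hmono
      have hcastall : ((rookCount b (m+1) (m+1-k)) : ℝ) =
          (rookCount b m (r+1) : ℝ) + ((b m : ℝ) - r) * (rookCount b m r : ℝ) := by
        rw [show m+1-k = r+1 by omega, hs]
        push_cast
        rw [← hcast r]
      rw [hcastall]
      have ht2k : t2 k = (rookCount b m r : ℝ) * ((b m : ℝ) - r) := by
        simp only [ht2, if_pos hkm]
        rw [← hr]
        have : ((r : ℕ) : ℝ) = (m : ℝ) - (k : ℝ) := by
          rw [hr]; push_cast [hkm]; ring
        rw [this]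
        ring_nf
      rcases Nat.eq_zero_or_pos k with rfl | hk0
      · have hz : rookCount b m (r+1) = 0 := by
          by_contra h
          have := rookCount_le_cols h
          omega
        simp only [ht1, if_pos rfl, hz, ht2k]
        push_cast
        ring
      · have ht1k : t1 k = (rookCount b m (r+1) : ℝ) := by
          simp only [ht1, if_neg (by omega : k ≠ 0)]
          congr 2
          omega
        rw [ht1k, ht2k]
        ring
    · have hk1 : k = m + 1 := by omega
      subst hk1
      have : m + 1 - (m+1) = 0 := by omega
      rw [this, rookCount_zero]
      simp only [ht1, ht2, if_neg (by omega : ¬(m+1 ≤ m)), if_neg (by omega : m+1 ≠ 0)]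
      have : m + 1 - (m+1) = 0 := by omega
      rw [this, rookCount_zero]
      norm_num

theorem statement14 (n : ℕ) (b : ℕ → ℕ)
    (hb : ∀ i j, i ≤ j → j < n → b i ≤ b j)
    (M : Matrix (Fin (n+1)) (Fin (n+1)) ℝ)
    (hM : IsCOB n (fun i => (i : ℝ)) (fun i => (i : ℝ) - (b i : ℝ)) M)
    (m k : ℕ) (hk : k ≤ m) (hm : m ≤ n) :
    M ⟨m, by omega⟩ ⟨k, by omega⟩ = (rookCount b m (m - k) : ℝ) := by
  have hmfin : m < n + 1 := by omega
  set mfin : Fin (n+1) := ⟨m, hmfin⟩ with hmf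
  set c : ℕ → ℝ := fun j => if h : j < n + 1 then M mfin ⟨j, h⟩ else 0 with hc
  set d : ℕ → ℝ := fun j => if j ≤ m then (rookCount b m (m-j) : ℝ) else 0 with hd
  have hsum1 : ∏ i ∈ Finset.range m, (X - C ((i : ℝ) - (b i : ℝ))) =
      ∑ j ∈ Finset.range (n+1), C (c j) * Fpoly j := by
    have := hM mfin
    simp only at this
    rw [this, ← Fin.sum_univ_eq_sum_range (fun j => C (c j) * Fpoly j) (n+1)]
    apply Finset.sum_congr rfl
    intro j _
    have : c (j : ℕ) = M mfin j := by
      rw [hc]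
      simp only [dif_pos j.isLt, Fin.eta]
    rw [this, Fpoly]
  have hsum2 : ∏ i ∈ Finset.range m, (X - C ((i : ℝ) - (b i : ℝ))) =
      ∑ j ∈ Finset.range (n+1), C (d j) * Fpoly j := by
    rw [key_identity b m (fun i j h1 h2 => hb i j h1 (by omega))]
    have e1 : ∑ j ∈ Finset.range (m+1), C ((rookCount b m (m-j) : ℝ)) * Fpoly j =
        ∑ j ∈ Finset.range (m+1), C (d j) * Fpoly j := by
      apply Finset.sum_congr rfl
      intro j hj
      have hjm : j ≤ m := by have := Finset.mem_range.mp hj; omega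
      rw [hd]
      simp only [if_pos hjm]
    rw [e1]
    apply Finset.sum_subset
    · intro j hj
      simp only [Finset.mem_range] at *
      omega
    · intro j _ hj
      simp only [Finset.mem_range, not_lt] at hj
      rw [hd]
      simp only [if_neg (by omega : ¬ j ≤ m), map_zero, zero_mul]
  have hzero : ∑ j ∈ Finset.range (n+1), C (c j - d j) * Fpoly j = 0 := by
    have : ∑ j ∈ Finset.range (n+1), C (c j - d j) * Fpoly j =
        (∑ j ∈ Finset.range (n+1), C (c j) * Fpoly j) -
        ∑ j ∈ Finset.range (n+1), C (d j) * Fpoly j := by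
      rw [← Finset.sum_sub_distrib]
      apply Finset.sum_congr rfl
      intro j _
      rw [map_sub, sub_mul]
    rw [this, ← hsum1, ← hsum2, sub_self]
  have h0 : c k - d k = 0 := Fpoly_indep n (fun j => c j - d j) hzero k (by omega)
  have hcd : c k = d k := by linarith
  calc M ⟨m, by omega⟩ ⟨k, by omega⟩ = c k := by
        simp only [hc]
        rw [dif_pos (show k < n+1 by omega)]
    _ = d k := hcd
    _ = (rookCount b m (m-k) : ℝ) := by simp only [hd, if_pos hk]
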